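/- Suppose Assumption (A) holds and r(n−1) < (1/10)(1/α + 1/β − 1). Then for every sign vector s ∈ {−1,+1}^{n−1}, |P^(s)₂|/(C₁ − P^(s)₁) < βφ/3, where φ = 1/α + 1/β − 1. -/

import Mathlib

open Matrix Polynomial Finset

noncomputable section

/-- The companion-type matrix of the `n`-dimensional border-collision normal form:
`(i,1)` entry is `-a i`, `(i,i+1)` entries are `1`, all other entries `0`. -/
def bcMat (n : ℕ) (a : Fin n → ℝ) : Matrix (Fin n) (Fin n) ℝ :=
  Matrix.of fun i j =>
    (if (j : ℕ) = 0 then -a i else 0) + (if (j : ℕ) = (i : ℕ) + 1 then 1 else 0)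

/-- The vector `b = (1,0,…,0)`. -/
def bcVec (n : ℕ) : Fin n → ℝ := fun i => if (i : ℕ) = 0 then 1 else 0

/-- `ρ` is an eigenvalue of `M` (of algebraic multiplicity one, automatic when `|ρ| > r`)
and all remaining eigenvalues of `M` over `ℂ`, counted with multiplicity,
have modulus at most `r`. -/
def specA (n : ℕ) (M : Matrix (Fin n) (Fin n) ℝ) (ρ r : ℝ) : Prop :=
  ∃ lam : Fin (n - 1) → ℂ,
    (∀ j, ‖lam j‖ ≤ r) ∧
      M.charpoly.map (algebraMap ℝ ℂ) =
        (X - C (ρ : ℂ)) * ∏ j : Fin (n - 1), (X - C (lam j))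

/-- Assumption (A). -/
def assumptionA (n : ℕ) (aL aR : Fin n → ℝ) (α β r : ℝ) : Prop :=
  1 < α ∧ 1 < β ∧ 0 < r ∧ r < 1 ∧
    specA n (bcMat n aL) α r ∧ specA n (bcMat n aR) (-β) r

/-- The border-collision normal form map `f`. -/
def bcf (n : ℕ) (aL aR : Fin n → ℝ) (x : Fin n → ℝ) : Fin n → ℝ :=
  if ∀ i : Fin n, (i : ℕ) = 0 → x i ≤ 0 then (bcMat n aL).mulVec x + bcVec n
  else (bcMat n aR).mulVec x + bcVec n

/-- The fixed point `Y = (I − A_L)⁻¹ b`. -/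
def Ypt (n : ℕ) (aL : Fin n → ℝ) : Fin n → ℝ :=
  ((1 - bcMat n aL)⁻¹).mulVec (bcVec n)

/-- The row vector `u = (α^{n-1}, …, α, 1)`. -/
def uvec (n : ℕ) (α : ℝ) : Fin n → ℝ := fun i => α ^ (n - 1 - (i : ℕ))

/-- The hyperplane `E = {x : uᵀ(x − Y) = 0}`. -/
def Eset (n : ℕ) (aL : Fin n → ℝ) (α : ℝ) : Set (Fin n → ℝ) :=
  {x | ∑ i : Fin n, uvec n α i * (x i - Ypt n aL i) = 0}

/-- The slab `H = {x : |x_i| ≤ M_i r^{i-1}, i = 2,…,n}` with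
`M_i = (2α/(α−1))·binom(n−1,i−1)`. -/
def Hset (n : ℕ) (α r : ℝ) : Set (Fin n → ℝ) :=
  {x | ∀ i : Fin n, 1 ≤ (i : ℕ) →
    |x i| ≤ 2 * α / (α - 1) * ((n - 1).choose (i : ℕ) : ℝ) * r ^ (i : ℕ)}

/-- The first component `C₁` of the point `C`. -/
def Cfirst (n : ℕ) (aL aR : Fin n → ℝ) (α : ℝ) : ℝ :=
  (1 - 1 / (1 - bcMat n aL).det +
      1 / (1 - bcMat n aL).det *
        ∑ k ∈ univ.filter (fun k : Fin n => 1 ≤ (k : ℕ)),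
          α ^ (-((k : ℕ) : ℤ)) *
            ∑ j ∈ univ.filter (fun j : Fin n => (k : ℕ) ≤ (j : ℕ)), aL j) /
    ∑ i : Fin n, α ^ (-((i : ℕ) : ℤ)) * aR i

/-- The point `C = (C₁, 0, …, 0)`. -/
def Cpt (n : ℕ) (aL aR : Fin n → ℝ) (α : ℝ) : Fin n → ℝ :=
  fun i => if (i : ℕ) = 0 then Cfirst n aL aR α else 0

/-- The polytope `Ω = Conv({C} ∪ (E ∩ H))`. -/
def OmegaSet (n : ℕ) (aL aR : Fin n → ℝ) (α r : ℝ) : Set (Fin n → ℝ) :=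
  convexHull ℝ ({Cpt n aL aR α} ∪ (Eset n aL α ∩ Hset n α r))

/-- The cone `Ψ` of scalar multiples of vectors `(1, m₁, …, m_{n-1})` with
`|m_i| ≤ N_i r^{i-1}`, `N_i = ((min(α,β)−1)/2)·binom(n−1,i−1)`. -/
def PsiSet (n : ℕ) (α β r : ℝ) : Set (Fin n → ℝ) :=
  {x | ∃ γ : ℝ, ∃ v : Fin n → ℝ,
    (∀ i : Fin n, (i : ℕ) = 0 → v i = 1) ∧
    (∀ i : Fin n, 1 ≤ (i : ℕ) →
      |v i| ≤ (min α β - 1) / 2 * ((n - 1).choose ((i : ℕ) - 1) : ℝ) * r ^ ((i : ℕ) - 1)) ∧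
    x = γ • v}

/-- `P` is the vertex `P^(s)`: the point of `E` whose `i`-th component, `i = 2,…,n`,
is `s_{i-1}·M_i r^{i-1}`. -/
def isVertexP (n : ℕ) (aL : Fin n → ℝ) (α r : ℝ) (s : Fin (n - 1) → ℝ)
    (P : Fin n → ℝ) : Prop :=
  P ∈ Eset n aL α ∧
    ∀ i : Fin n, ∀ _h : 1 ≤ (i : ℕ),
      P i = s ⟨(i : ℕ) - 1, by have := i.isLt; omega⟩ *
        (2 * α / (α - 1) * ((n - 1).choose (i : ℕ) : ℝ) * r ^ (i : ℕ))

/-- The `k`-th elementary symmetric polynomial of `η`. -/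
def esym {m : ℕ} (η : Fin m → ℂ) (k : ℕ) : ℂ :=
  ∑ t ∈ powersetCard k univ, ∏ j ∈ t, η j

end


section auxlemmas

lemma bc_det : ∀ (n : ℕ) (a : Fin (n+1) → ℝ) (x : ℝ),
    (x • (1 : Matrix (Fin (n+1)) (Fin (n+1)) ℝ) - bcMat (n+1) a).det
      = x^(n+1) + ∑ i : Fin (n+1), a i * x^(n - (i:ℕ)) := by
  intro n
  induction n with
  | zero =>
    intro a x
    rw [Matrix.det_fin_one]
    simp [bcMat, Matrix.one_apply]
  | succ m ih =>
    intro a x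
    set M := x • (1 : Matrix (Fin (m+2)) (Fin (m+2)) ℝ) - bcMat (m+2) a with hM
    have hMapp : ∀ i j : Fin (m+2), M i j =
        x * (if i = j then 1 else 0) -
          ((if (j : ℕ) = 0 then -a i else 0) + (if (j : ℕ) = (i : ℕ) + 1 then 1 else 0)) := by
      intro i j
      simp [hM, bcMat, Matrix.one_apply, Matrix.smul_apply, Matrix.sub_apply]
    have hexp := Matrix.det_succ_row M (Fin.last (m+1))
    have hzero : ∀ j : Fin (m+2), j ≠ 0 → j ≠ Fin.last (m+1) →
        (-1 : ℝ) ^ ((Fin.last (m+1) : ℕ) + (j:ℕ)) * M (Fin.last (m+1)) j *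
          (M.submatrix (Fin.last (m+1)).succAbove j.succAbove).det = 0 := by
      intro j hj0 hjl
      have h1 : (j:ℕ) ≠ 0 := fun h => hj0 (Fin.ext h)
      have h2 : Fin.last (m+1) ≠ j := fun h => hjl h.symm
      have h3 : (j:ℕ) ≠ (m+1)+1 := by have := j.isLt; omega
      rw [hMapp]
      simp [h1, h2, h3]
    have hsum : M.det = (-1 : ℝ) ^ ((Fin.last (m+1) : ℕ) + ((0 : Fin (m+2)):ℕ)) *
          M (Fin.last (m+1)) 0 *
          (M.submatrix (Fin.last (m+1)).succAbove (0 : Fin (m+2)).succAbove).det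
        + (-1 : ℝ) ^ ((Fin.last (m+1) : ℕ) + ((Fin.last (m+1)):ℕ)) *
          M (Fin.last (m+1)) (Fin.last (m+1)) *
          (M.submatrix (Fin.last (m+1)).succAbove (Fin.last (m+1)).succAbove).det := by
      rw [hexp]
      have hne : (0 : Fin (m+2)) ≠ Fin.last (m+1) := by
        simp [Fin.ext_iff]
      have hsub : ∑ j : Fin (m+2),
          (-1 : ℝ) ^ ((Fin.last (m+1) : ℕ) + (j:ℕ)) * M (Fin.last (m+1)) j *
            (M.submatrix (Fin.last (m+1)).succAbove j.succAbove).det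
          = ∑ j ∈ ({0, Fin.last (m+1)} : Finset (Fin (m+2))),
          (-1 : ℝ) ^ ((Fin.last (m+1) : ℕ) + (j:ℕ)) * M (Fin.last (m+1)) j *
            (M.submatrix (Fin.last (m+1)).succAbove j.succAbove).det := by
        refine (Finset.sum_subset (Finset.subset_univ _) ?_).symm
        intro j _ hj
        simp only [Finset.mem_insert, Finset.mem_singleton, not_or] at hj
        exact hzero j hj.1 hj.2
      rw [hsub, Finset.sum_pair hne]
    -- minor at column 0
    have hsub0 : (M.submatrix (Fin.last (m+1)).succAbove (0 : Fin (m+2)).succAbove).det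
        = (-1 : ℝ) ^ (m+1) := by
      rw [Fin.succAbove_last, Fin.succAbove_zero]
      have htri : (M.submatrix Fin.castSucc Fin.succ).BlockTriangular OrderDual.toDual := by
        intro p q hpq
        have hpq' : p < q := hpq
        rw [Matrix.submatrix_apply, hMapp]
        have h1 : ¬ (Fin.castSucc p = Fin.succ q) := by
          intro h
          have := Fin.ext_iff.mp h
          simp at this
          omega
        have h2 : ((Fin.succ q : Fin (m+2)) : ℕ) ≠ 0 := by simp
        have h3 : ((Fin.succ q : Fin (m+2)) : ℕ) ≠ ((Fin.castSucc p : Fin (m+2)) : ℕ) + 1 := by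
          simp only [Fin.val_succ, Fin.coe_castSucc]
          have : (p:ℕ) < (q:ℕ) := hpq'
          omega
        have h4 : (p:ℕ) < (q:ℕ) := hpq'
        simp [h1, h2, h3]
        omega
      rw [Matrix.det_of_lowerTriangular _ htri]
      have : ∀ p : Fin (m+1), (M.submatrix Fin.castSucc Fin.succ) p p = -1 := by
        intro p
        rw [Matrix.submatrix_apply, hMapp]
        have h1 : ¬ (Fin.castSucc p = Fin.succ p) := by
          intro h; have := Fin.ext_iff.mp h; simp at this
        have h2 : ((Fin.succ p : Fin (m+2)) : ℕ) ≠ 0 := by simp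
        have h3 : ((Fin.succ p : Fin (m+2)) : ℕ) = ((Fin.castSucc p : Fin (m+2)) : ℕ) + 1 := by simp
        simp [h1, h2, h3]
      rw [Finset.prod_congr rfl (fun p _ => this p)]
      simp
    -- minor at column last
    have hsubl : (M.submatrix (Fin.last (m+1)).succAbove (Fin.last (m+1)).succAbove)
        = x • (1 : Matrix (Fin (m+1)) (Fin (m+1)) ℝ) - bcMat (m+1) (fun i => a i.castSucc) := by
      rw [Fin.succAbove_last]
      ext p q
      rw [Matrix.submatrix_apply, hMapp]
      have hcast : (Fin.castSucc p = Fin.castSucc q) ↔ (p = q) := by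
        constructor
        · intro h; exact Fin.castSucc_injective _ h
        · intro h; rw [h]
      simp only [Matrix.sub_apply, Matrix.smul_apply, Matrix.one_apply, bcMat, Matrix.of_apply,
        Fin.coe_castSucc, smul_eq_mul]
      by_cases h : p = q
      · simp [h]
      · have : ¬ (Fin.castSucc p = Fin.castSucc q) := fun hh => h (Fin.castSucc_injective _ hh)
        simp [h, this]
    have hM00 : M (Fin.last (m+1)) 0 = a (Fin.last (m+1)) := by
      rw [hMapp]
      have h1 : Fin.last (m+1) ≠ (0 : Fin (m+2)) := by simp [Fin.ext_iff]
      simp [h1]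
    have hMll : M (Fin.last (m+1)) (Fin.last (m+1)) = x := by
      rw [hMapp]
      have : ((Fin.last (m+1) : Fin (m+2)):ℕ) = m + 1 := by simp [Fin.last]
      simp [this]
    rw [hsum, hsub0, hsubl, ih, hM00, hMll]
    have hfl : ((Fin.last (m+1) : Fin (m+2)) : ℕ) = m+1 := by simp [Fin.last]
    rw [hfl]
    rw [Fin.sum_univ_castSucc (n := m+1) (f := fun i : Fin (m+2) => a i * x ^ (m + 1 - (i:ℕ)))]
    have hterm : ∀ i : Fin (m+1), a i.castSucc * x ^ (m + 1 - ((i.castSucc : Fin (m+2)):ℕ))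
        = x * (a i.castSucc * x ^ (m - (i:ℕ))) := by
      intro i
      have : m + 1 - ((i.castSucc : Fin (m+2)):ℕ) = (m - (i:ℕ)) + 1 := by
        have := i.isLt; simp only [Fin.coe_castSucc]; omega
      rw [this, pow_succ]; ring
    rw [Finset.sum_congr rfl (fun i _ => hterm i)]
    have : ((Fin.last (m+1)):ℕ) = m+1 := by simp
    rw [this]
    simp only [Nat.sub_self, pow_zero, mul_one]
    rw [← Finset.mul_sum]
    ring_nf
    have hm2 : ((-1:ℝ))^(m*2) = 1 := by rw [mul_comm, pow_mul]; norm_num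
    simp only [hm2, Fin.val_zero, pow_zero, mul_one, one_mul]

lemma aux_charpoly_eval (m : ℕ) (M : Matrix (Fin m) (Fin m) ℝ) (x : ℝ) :
    M.charpoly.eval x = (x • (1 : Matrix (Fin m) (Fin m) ℝ) - M).det := by
  rw [Matrix.charpoly]
  have h := (Polynomial.evalRingHom x).map_det (Matrix.charmatrix M)
  simp only [Polynomial.coe_evalRingHom] at h
  rw [h]
  congr 1
  ext i j
  by_cases hij : i = j
  · subst hij
    simp [Matrix.charmatrix_apply, Matrix.one_apply, Matrix.diagonal_apply]
  · simp [Matrix.charmatrix_apply, Matrix.one_apply, Matrix.diagonal_apply, hij]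

lemma spec_eval (m : ℕ) (M : Matrix (Fin (m+1)) (Fin (m+1)) ℝ) (ρ : ℝ) (lam : Fin m → ℂ)
    (hfac : M.charpoly.map (algebraMap ℝ ℂ) = (X - C (ρ:ℂ)) * ∏ j : Fin m, (X - C (lam j)))
    (x : ℝ) :
    ((M.charpoly.eval x : ℝ) : ℂ) = ((x:ℂ) - ρ) * ∏ j : Fin m, ((x:ℂ) - lam j) := by
  have h1 : ((M.charpoly.map (algebraMap ℝ ℂ)).eval ((x:ℂ))) = ((M.charpoly.eval x : ℝ):ℂ) := by
    have : ((x:ℂ)) = algebraMap ℝ ℂ x := rfl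
    rw [Polynomial.eval_map, this, Polynomial.eval₂_at_apply]
    rfl
  rw [← h1, hfac]
  simp [Polynomial.eval_prod]

lemma abs_prod_one_sub_sub_one {ι : Type*} (s : Finset ι) (z : ι → ℂ) :
    ‖∏ j ∈ s, (1 - z j) - 1‖ ≤ ∏ j ∈ s, (1 + ‖z j‖) - 1 := by
  classical
  induction s using Finset.induction_on with
  | empty => simp
  | @insert a s ha ih =>
    rw [Finset.prod_insert ha, Finset.prod_insert ha]
    have key : (1 - z a) * ∏ j ∈ s, (1 - z j) - 1
        = (1 - z a) * (∏ j ∈ s, (1 - z j) - 1) + (- z a) := by ring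
    rw [key]
    calc ‖(1 - z a) * (∏ j ∈ s, (1 - z j) - 1) + (- z a)‖
        ≤ ‖(1 - z a) * (∏ j ∈ s, (1 - z j) - 1)‖ + ‖- z a‖ :=
          norm_add_le _ _
      _ = ‖1 - z a‖ * ‖∏ j ∈ s, (1 - z j) - 1‖ + ‖z a‖ := by
          rw [norm_mul, norm_neg]
      _ ≤ (1 + ‖z a‖) * (∏ j ∈ s, (1 + ‖z j‖) - 1) + ‖z a‖ := by
          have h1 : ‖1 - z a‖ ≤ 1 + ‖z a‖ := by
            calc ‖1 - z a‖ ≤ ‖(1:ℂ)‖ + ‖z a‖ := norm_sub_le _ _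
              _ = 1 + ‖z a‖ := by simp
          have h2 : (0:ℝ) ≤ ‖∏ j ∈ s, (1 - z j) - 1‖ := norm_nonneg _
          have h3 : (0:ℝ) ≤ 1 + ‖z a‖ := by positivity
          exact add_le_add_left (mul_le_mul h1 ih h2 h3) _
      _ = (1 + ‖z a‖) * ∏ j ∈ s, (1 + ‖z j‖) - 1 := by ring

lemma prod_one_add_le {ι : Type*} (s : Finset ι) (t : ι → ℝ) (h0 : ∀ j ∈ s, 0 ≤ t j)
    (hs : ∑ j ∈ s, t j ≤ 1/2) : ∏ j ∈ s, (1 + t j) ≤ 1 + 2 * ∑ j ∈ s, t j := by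
  classical
  induction s using Finset.induction_on with
  | empty => simp
  | @insert a s ha ih =>
    rw [Finset.sum_insert ha] at hs ⊢
    rw [Finset.prod_insert ha]
    have hta : 0 ≤ t a := h0 a (Finset.mem_insert_self a s)
    have hS0 : 0 ≤ ∑ j ∈ s, t j := Finset.sum_nonneg fun j hj => h0 j (Finset.mem_insert_of_mem hj)
    have hS : ∑ j ∈ s, t j ≤ 1/2 := by linarith
    have hih := ih (fun j hj => h0 j (Finset.mem_insert_of_mem hj)) hS
    calc (1 + t a) * ∏ j ∈ s, (1 + t j) ≤ (1 + t a) * (1 + 2 * ∑ j ∈ s, t j) := by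
          apply mul_le_mul_of_nonneg_left hih; linarith
      _ ≤ 1 + 2 * (t a + ∑ j ∈ s, t j) := by nlinarith

lemma pow_one_add_le (m : ℕ) (t : ℝ) (ht : 0 ≤ t) (hmt : (m:ℝ) * t ≤ 1/2) :
    (1 + t) ^ m ≤ 1 + 2 * ((m:ℝ) * t) := by
  have := prod_one_add_le (Finset.range m) (fun _ => t) (fun _ _ => ht)
    (by rw [Finset.sum_const, Finset.card_range]; simpa [nsmul_eq_mul] using hmt)
  simpa [Finset.prod_const, Finset.sum_const, Finset.card_range, nsmul_eq_mul, mul_comm] using this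

lemma ucol (k : ℕ) (aL : Fin (k+2) → ℝ) (α : ℝ)
    (hroot : α^(k+2) + ∑ i : Fin (k+2), aL i * α^(k+1-(i:ℕ)) = 0) (j : Fin (k+2)) :
    ∑ i : Fin (k+2), uvec (k+2) α i * (1 - bcMat (k+2) aL) i j
      = (1 - α) * uvec (k+2) α j := by
  have hB : ∀ i : Fin (k+2), (1 - bcMat (k+2) aL) i j =
      (if i = j then 1 else 0) -
        ((if (j:ℕ) = 0 then -aL i else 0) + (if (j:ℕ) = (i:ℕ)+1 then 1 else 0)) := by
    intro i
    simp [bcMat, Matrix.one_apply, Matrix.sub_apply]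
  by_cases hj0 : (j:ℕ) = 0
  · have hjeq : j = ⟨0, by omega⟩ := Fin.ext hj0
    have : ∀ i : Fin (k+2), uvec (k+2) α i * (1 - bcMat (k+2) aL) i j
        = (if i = j then uvec (k+2) α i else 0) + uvec (k+2) α i * aL i := by
      intro i
      rw [hB i]
      have h2 : (j:ℕ) ≠ (i:ℕ)+1 := by omega
      by_cases h : i = j <;> simp [h, hj0, h2] <;> ring
    rw [Finset.sum_congr rfl (fun i _ => this i), Finset.sum_add_distrib,
      Finset.sum_ite_eq' univ j (uvec (k+2) α)]
    have hsum : ∑ i : Fin (k+2), uvec (k+2) α i * aL i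
        = ∑ i : Fin (k+2), aL i * α^(k+1-(i:ℕ)) := by
      apply Finset.sum_congr rfl
      intro i _
      simp [uvec]
      ring
    rw [hsum]
    have h1 : ∑ i : Fin (k+2), aL i * α^(k+1-(i:ℕ)) = -α^(k+2) := by linarith
    have huj : uvec (k+2) α j = α^(k+1) := by simp [uvec, hjeq]
    simp only [Finset.mem_univ, if_true, huj, h1]
    ring
  · -- j ≥ 1
    have hjv : 1 ≤ (j:ℕ) := by omega
    set i₀ : Fin (k+2) := ⟨(j:ℕ)-1, by have := j.isLt; omega⟩ with hi₀
    have : ∀ i : Fin (k+2), uvec (k+2) α i * (1 - bcMat (k+2) aL) i j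
        = (if i = j then uvec (k+2) α i else 0) - (if i = i₀ then uvec (k+2) α i else 0) := by
      intro i
      rw [hB i]
      have hifa : (if (j:ℕ) = 0 then -aL i else 0) = 0 := if_neg hj0
      rw [hifa]
      by_cases h : i = j
      · have hv : (i:ℕ) = (j:ℕ) := by rw [h]
        have h2 : ¬ ((j:ℕ) = (i:ℕ)+1) := by omega
        have h3 : ¬ i = i₀ := by
          intro hh
          have := congrArg Fin.val hh
          simp only [hi₀] at this
          omega
        rw [if_pos h, if_neg h2, if_pos h, if_neg h3]
        ring
      · by_cases h' : i = i₀
        · have hv : (i:ℕ) = (j:ℕ)-1 := by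
            have := congrArg Fin.val h'
            simpa [hi₀] using this
          have h2 : ((j:ℕ) = (i:ℕ)+1) := by omega
          rw [if_neg h, if_pos h2, if_neg h, if_pos h']
          ring
        · have h2 : ¬ ((j:ℕ) = (i:ℕ)+1) := by
            intro hh
            apply h'
            apply Fin.ext
            simp only [hi₀]
            omega
          rw [if_neg h, if_neg h2, if_neg h, if_neg h']
          ring
    rw [Finset.sum_congr rfl (fun i _ => this i), Finset.sum_sub_distrib,
      Finset.sum_ite_eq' univ j (uvec (k+2) α), Finset.sum_ite_eq' univ i₀ (uvec (k+2) α)]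
    simp only [Finset.mem_univ, if_true]
    have hval : uvec (k+2) α j = α ^ (k+1-(j:ℕ)) := by simp [uvec]
    have hval' : uvec (k+2) α i₀ = α ^ ((k+1-(j:ℕ))+1) := by
      simp only [uvec, hi₀]
      congr 1
      have := j.isLt
      omega
    rw [hval, hval', pow_succ]
    ring

lemma udotY (k : ℕ) (aL : Fin (k+2) → ℝ) (α : ℝ) (hα1 : α ≠ 1)
    (hroot : α^(k+2) + ∑ i : Fin (k+2), aL i * α^(k+1-(i:ℕ)) = 0)
    (hdet : IsUnit (1 - bcMat (k+2) aL).det) :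
    ∑ i : Fin (k+2), uvec (k+2) α i * Ypt (k+2) aL i = α^(k+1) / (1 - α) := by
  set B := 1 - bcMat (k+2) aL with hBdef
  have hBY : B.mulVec (Ypt (k+2) aL) = bcVec (k+2) := by
    rw [Ypt, Matrix.mulVec_mulVec, Matrix.mul_nonsing_inv B hdet, Matrix.one_mulVec]
  have hKey : ∑ i : Fin (k+2), uvec (k+2) α i * (B.mulVec (Ypt (k+2) aL)) i
      = (1 - α) * ∑ i : Fin (k+2), uvec (k+2) α i * Ypt (k+2) aL i := by
    have hmv : ∀ i, (B.mulVec (Ypt (k+2) aL)) i = ∑ j : Fin (k+2), B i j * Ypt (k+2) aL j := by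
      intro i
      rfl
    calc ∑ i : Fin (k+2), uvec (k+2) α i * (B.mulVec (Ypt (k+2) aL)) i
        = ∑ i : Fin (k+2), ∑ j : Fin (k+2), uvec (k+2) α i * (B i j * Ypt (k+2) aL j) := by
          apply Finset.sum_congr rfl
          intro i _
          rw [hmv i, Finset.mul_sum]
      _ = ∑ j : Fin (k+2), (∑ i : Fin (k+2), uvec (k+2) α i * B i j) * Ypt (k+2) aL j := by
          rw [Finset.sum_comm]
          apply Finset.sum_congr rfl
          intro j _
          rw [Finset.sum_mul]
          apply Finset.sum_congr rfl
          intro i _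
          ring
      _ = ∑ j : Fin (k+2), ((1 - α) * uvec (k+2) α j) * Ypt (k+2) aL j := by
          apply Finset.sum_congr rfl
          intro j _
          rw [ucol k aL α hroot j]
      _ = (1 - α) * ∑ i : Fin (k+2), uvec (k+2) α i * Ypt (k+2) aL i := by
          rw [Finset.mul_sum]
          apply Finset.sum_congr rfl
          intro j _
          ring
  rw [hBY] at hKey
  have hlhs : ∑ i : Fin (k+2), uvec (k+2) α i * bcVec (k+2) i = α^(k+1) := by
    have : ∀ i : Fin (k+2), uvec (k+2) α i * bcVec (k+2) i
        = if i = (⟨0, by omega⟩ : Fin (k+2)) then uvec (k+2) α i else 0 := by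
      intro i
      by_cases h : i = (⟨0, by omega⟩ : Fin (k+2))
      · rw [if_pos h, h]
        simp [bcVec]
      · have hv : (i:ℕ) ≠ 0 := fun hh => h (Fin.ext hh)
        rw [if_neg h]
        simp [bcVec, hv]
    rw [Finset.sum_congr rfl (fun i _ => this i), Finset.sum_ite_eq' univ _ (uvec (k+2) α)]
    simp [uvec]
  rw [hlhs] at hKey
  have h1α : 1 - α ≠ 0 := by intro h; apply hα1; linarith
  field_simp at hKey ⊢
  linarith

lemma geom_c (k : ℕ) (α : ℝ) (hα : 1 < α) (j : Fin (k+2)) :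
    ∑ kk : Fin (k+2), (if 1 ≤ (kk:ℕ) ∧ (kk:ℕ) ≤ (j:ℕ) then (α⁻¹)^(kk:ℕ) else 0)
      = (1 - (α⁻¹)^(j:ℕ)) / (α - 1) := by
  have hα0 : α ≠ 0 := by linarith
  have hα1 : α - 1 ≠ 0 := by intro h; linarith
  have hlt : α⁻¹ < 1 := by
    rw [inv_lt_one_iff₀]
    right; exact hα
  have hinv1 : α⁻¹ ≠ 1 := fun h => by rw [h] at hlt; linarith
  rw [Fin.sum_univ_eq_sum_range (fun m => if 1 ≤ m ∧ m ≤ (j:ℕ) then (α⁻¹)^m else 0) (k+2)]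
  have hsub : ∑ m ∈ Finset.range ((j:ℕ)+1), (if 1 ≤ m ∧ m ≤ (j:ℕ) then (α⁻¹)^m else 0)
      = ∑ m ∈ Finset.range (k+2), (if 1 ≤ m ∧ m ≤ (j:ℕ) then (α⁻¹)^m else 0) := by
    apply Finset.sum_subset
    · apply Finset.range_subset_range.mpr
      have := j.isLt; omega
    · intro m _ hm
      rw [Finset.mem_range, not_lt] at hm
      have : ¬ (1 ≤ m ∧ m ≤ (j:ℕ)) := by omega
      rw [if_neg this]
  rw [← hsub, Finset.sum_range_succ']
  have h0 : (if 1 ≤ 0 ∧ 0 ≤ (j:ℕ) then (α⁻¹)^0 else (0:ℝ)) = 0 := by norm_num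
  rw [h0, add_zero]
  have hterm : ∀ m ∈ Finset.range (j:ℕ),
      (if 1 ≤ m+1 ∧ m+1 ≤ (j:ℕ) then (α⁻¹)^(m+1) else (0:ℝ)) = α⁻¹ * (α⁻¹)^m := by
    intro m hm
    rw [Finset.mem_range] at hm
    rw [if_pos (by omega), pow_succ]
    ring
  rw [Finset.sum_congr rfl hterm, ← Finset.mul_sum, geom_sum_eq hinv1]
  have hx1 : α⁻¹ - 1 ≠ 0 := fun h => hinv1 (by linarith)
  rw [mul_div_assoc', div_eq_div_iff hx1 hα1]
  field_simp
  ring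

lemma Ssum (k : ℕ) (aL : Fin (k+2) → ℝ) (α : ℝ) (hα : 1 < α) :
    ∑ kk ∈ univ.filter (fun kk : Fin (k+2) => 1 ≤ (kk:ℕ)),
        (α:ℝ) ^ (-(((kk:ℕ)):ℤ)) * ∑ j ∈ univ.filter (fun j : Fin (k+2) => (kk:ℕ) ≤ (j:ℕ)), aL j
      = ∑ j : Fin (k+2), aL j * ((1 - (α⁻¹)^(j:ℕ)) / (α - 1)) := by
  have hα0 : α ≠ 0 := by linarith
  have hz : ∀ m : ℕ, (α:ℝ) ^ (-((m:ℕ):ℤ)) = (α⁻¹)^m := by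
    intro m
    rw [_root_.zpow_neg, zpow_natCast, inv_pow]
  have step1 : ∑ kk ∈ univ.filter (fun kk : Fin (k+2) => 1 ≤ (kk:ℕ)),
        (α:ℝ) ^ (-(((kk:ℕ)):ℤ)) * ∑ j ∈ univ.filter (fun j : Fin (k+2) => (kk:ℕ) ≤ (j:ℕ)), aL j
      = ∑ kk : Fin (k+2), ∑ j : Fin (k+2),
          (if 1 ≤ (kk:ℕ) ∧ (kk:ℕ) ≤ (j:ℕ) then (α⁻¹)^(kk:ℕ) * aL j else 0) := by
    rw [Finset.sum_filter]
    apply Finset.sum_congr rfl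
    intro kk _
    by_cases h : 1 ≤ (kk:ℕ)
    · rw [if_pos h, Finset.sum_filter, Finset.mul_sum]
      apply Finset.sum_congr rfl
      intro j _
      by_cases h' : (kk:ℕ) ≤ (j:ℕ)
      · rw [if_pos h', if_pos ⟨h, h'⟩, hz]
      · rw [if_neg h', if_neg (by tauto), mul_zero]
    · rw [if_neg h]
      symm
      apply Finset.sum_eq_zero
      intro j _
      rw [if_neg (by tauto)]
  rw [step1, Finset.sum_comm]
  apply Finset.sum_congr rfl
  intro j _
  rw [← geom_c k α hα j, Finset.mul_sum]
  apply Finset.sum_congr rfl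
  intro kk _
  by_cases h : 1 ≤ (kk:ℕ) ∧ (kk:ℕ) ≤ (j:ℕ)
  · rw [if_pos h, if_pos h]
    ring
  · rw [if_neg h, if_neg h, mul_zero]

lemma arith_G (α β ε G : ℝ) (hα : 1 < α) (hβ : 1 < β)
    (hεα : ε*α < 1/10) (hεβ : ε*β < 1/10)
    (hGlow : β - 2*ε*(α+β) ≤ G) (hGhigh : G ≤ β + 2*ε*(α+β)) :
    0 < G ∧ G < β + 2/5 := by
  constructor <;> nlinarith

lemma arith_key (α β ε φ q : ℝ) (hα : 1 < α) (hβ : 1 < β) (hφ : 0 < φ) (hε : 0 < ε)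
    (hεφ : ε < φ/10) (hε10 : ε < 1/10) (hq3 : 3*α ≤ 5*β*q) (hqpos : 0 < q) :
    2*α*ε < β*φ/3 * (1 + q - 4*ε) := by
  have hα0 : (0:ℝ) < α := by linarith
  have hβφ : 0 < β*φ := by positivity
  nlinarith [mul_lt_mul_of_pos_left hεφ hα0,
    mul_le_mul_of_nonneg_left hq3 (le_of_lt hφ),
    mul_lt_mul_of_pos_left hε10 hβφ,
    mul_pos hβφ hqpos]

lemma arith_q2 (α β : ℝ) (hα : 1 < α) (hβ : 1 < β) : 3*α/(5*β) ≤ α/(β + 2/5) := by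
  rw [div_le_div_iff₀ (by positivity) (by linarith)]
  nlinarith

end auxlemmas

set_option maxHeartbeats 2000000 in
/-- Under Assumption (A) and `r(n−1) < (1/10)(1/α + 1/β − 1)`, every vertex `P^(s)`
satisfies `|P^(s)₂|/(C₁ − P^(s)₁) < βφ/3`, where `φ = 1/α + 1/β − 1`. -/
theorem stmt_14 (n : ℕ) (hn : 2 ≤ n) (aL aR : Fin n → ℝ) (α β r : ℝ)
    (hA : assumptionA n aL aR α β r)
    (hrn : r * ((n : ℝ) - 1) < 1 / 10 * (1 / α + 1 / β - 1))
    (s : Fin (n - 1) → ℝ) (hs : ∀ j, s j = 1 ∨ s j = -1)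
    (P : Fin n → ℝ) (hP : isVertexP n aL α r s P) :
    |P ⟨1, by omega⟩| / (Cfirst n aL aR α - P ⟨0, by omega⟩) <
      β * (1 / α + 1 / β - 1) / 3 := by
  obtain ⟨k, rfl⟩ : ∃ k, n = k + 2 := ⟨n - 2, by omega⟩
  obtain ⟨hα, hβ, hr, hr1, hL, hR⟩ := hA
  obtain ⟨lam, hlam, hLfac⟩ := hL
  obtain ⟨mu, hmu, hRfac⟩ := hR
  have hα0 : (0:ℝ) < α := by linarith
  have hβ0 : (0:ℝ) < β := by linarith
  have hα1 : α - 1 > 0 := by linarith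
  have hαne : α ≠ 0 := ne_of_gt hα0
  set φ : ℝ := 1/α + 1/β - 1 with hφdef
  set ε : ℝ := r * ((k:ℝ) + 1) with hεdef
  have hεpos : 0 < ε := by positivity
  have hεφ : ε < φ/10 := by
    have h : r * (((k:ℕ):ℝ) + 2 - 1) < 1/10 * φ := by
      convert hrn using 3
      push_cast
      ring
    rw [hεdef]
    nlinarith [h]
  clear_value φ ε
  have hφpos : 0 < φ := by linarith
  have hφα : φ < 1/α := by
    have : 1/β < 1 := by rw [div_lt_one hβ0]; exact hβ
    rw [hφdef]; linarith
  have hφβ : φ < 1/β := by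
    have : 1/α < 1 := by rw [div_lt_one hα0]; exact hα
    rw [hφdef]; linarith
  have hφ1 : φ < 1 := by
    have h1 : 1/α < 1 := by rw [div_lt_one hα0]; exact hα
    have h2 : 1/β < 1 := by rw [div_lt_one hβ0]; exact hβ
    rw [hφdef]; linarith
  have hφαm : φ * α < 1 := by
    have := (lt_div_iff₀ hα0).mp hφα
    linarith
  have hφβm : φ * β < 1 := by
    have := (lt_div_iff₀ hβ0).mp hφβ
    linarith
  have hεα : ε * α < 1/10 := by nlinarith [mul_lt_mul_of_pos_right hεφ hα0]
  have hεβ : ε * β < 1/10 := by nlinarith [mul_lt_mul_of_pos_right hεφ hβ0]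
  have hε10 : ε < 1/10 := by linarith
  -- characteristic polynomial facts, left matrix
  have hLC : ∀ x : ℝ, ((x^(k+2) + ∑ i : Fin (k+2), aL i * x^(k+1-(i:ℕ)) : ℝ) : ℂ)
      = ((x:ℂ) - (α:ℂ)) * ∏ j : Fin (k+1), ((x:ℂ) - lam j) := by
    intro x
    have h := spec_eval (k+1) (bcMat (k+2) aL) α lam hLfac x
    rw [aux_charpoly_eval, bc_det] at h
    exact h
  have hRC : ∀ x : ℝ, ((x^(k+2) + ∑ i : Fin (k+2), aR i * x^(k+1-(i:ℕ)) : ℝ) : ℂ)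
      = ((x:ℂ) + (β:ℂ)) * ∏ j : Fin (k+1), ((x:ℂ) - mu j) := by
    intro x
    have h := spec_eval (k+1) (bcMat (k+2) aR) (-β) mu hRfac x
    rw [aux_charpoly_eval, bc_det] at h
    rw [h]
    push_cast
    ring
  have hrootL : α^(k+2) + ∑ i : Fin (k+2), aL i * α^(k+1-(i:ℕ)) = 0 := by
    have h := hLC α
    rw [sub_self, zero_mul] at h
    exact_mod_cast h
  have hdetL1 : (1 - bcMat (k+2) aL).det = 1 + ∑ i : Fin (k+2), aL i := by
    have h := bc_det (k+1) aL 1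
    rw [one_smul] at h
    simpa using h
  have hΔne : (1 - bcMat (k+2) aL).det ≠ 0 := by
    intro h0
    have h := hLC 1
    have hl : ((1:ℝ)^(k+2) + ∑ i : Fin (k+2), aL i * (1:ℝ)^(k+1-(i:ℕ))) = 0 := by
      have : ((1:ℝ)^(k+2) + ∑ i : Fin (k+2), aL i * (1:ℝ)^(k+1-(i:ℕ)))
          = 1 + ∑ i : Fin (k+2), aL i := by simp
      rw [this, ← hdetL1]
      exact h0
    rw [hl] at h
    have hR0 : (((1:ℝ):ℂ) - (α:ℂ)) * ∏ j : Fin (k+1), (((1:ℝ):ℂ) - lam j) ≠ 0 := by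
      apply mul_ne_zero
      · rw [sub_ne_zero]
        intro hh
        have : (1:ℝ) = α := by exact_mod_cast hh
        linarith
      · rw [Finset.prod_ne_zero_iff]
        intro j _
        rw [sub_ne_zero]
        intro hh
        have := hlam j
        rw [← hh] at this
        simp at this
        linarith
    exact hR0 (by rw [← h]; norm_num)
  -- right polynomial at α
  set pRα : ℝ := α^(k+2) + ∑ i : Fin (k+2), aR i * α^(k+1-(i:ℕ)) with hpRαdef
  have hpRc : ((pRα:ℝ):ℂ) = ((α:ℂ) + (β:ℂ)) * ∏ j : Fin (k+1), ((α:ℂ) - mu j) := hRC α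
  have hprodsplit : ∏ j : Fin (k+1), ((α:ℂ) - mu j)
      = (α:ℂ)^(k+1) * ∏ j : Fin (k+1), (1 - mu j / (α:ℂ)) := by
    have hαc : (α:ℂ) ≠ 0 := by exact_mod_cast hαne
    calc ∏ j : Fin (k+1), ((α:ℂ) - mu j)
        = ∏ j : Fin (k+1), ((α:ℂ) * (1 - mu j / (α:ℂ))) := by
          apply Finset.prod_congr rfl
          intro j _
          field_simp
      _ = (∏ _j : Fin (k+1), (α:ℂ)) * ∏ j : Fin (k+1), (1 - mu j / (α:ℂ)) :=
          Finset.prod_mul_distrib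
      _ = (α:ℂ)^(k+1) * ∏ j : Fin (k+1), (1 - mu j / (α:ℂ)) := by
          rw [Finset.prod_const, Finset.card_univ, Fintype.card_fin]
  have hαβne : (α + β) * α^(k+1) ≠ 0 := by positivity
  set g : ℝ := pRα / ((α + β) * α^(k+1)) with hgdef
  have hpRval : pRα = (α + β) * α^(k+1) * g := by
    rw [hgdef]
    field_simp
  have hgc : ((g:ℝ):ℂ) = ∏ j : Fin (k+1), (1 - mu j / (α:ℂ)) := by
    have hcne : ((α:ℂ) + (β:ℂ)) * ((α:ℂ))^(k+1) ≠ 0 := by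
      apply mul_ne_zero
      · have h1 : ((α + β : ℝ)) ≠ 0 := by positivity
        intro h
        apply h1
        exact_mod_cast (by push_cast; exact h : (((α + β:ℝ)):ℂ) = 0)
      · apply pow_ne_zero
        intro h
        exact hαne (by exact_mod_cast h)
    rw [hgdef]
    push_cast
    rw [hpRc, hprodsplit]
    rw [show ((α:ℂ) + (β:ℂ)) * ((α:ℂ)^(k+1) * ∏ j : Fin (k+1), (1 - mu j / (α:ℂ)))
        = (((α:ℂ) + (β:ℂ)) * (α:ℂ)^(k+1)) * ∏ j : Fin (k+1), (1 - mu j / (α:ℂ)) from by ring]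
    exact mul_div_cancel_left₀ _ hcne
  have hgabs : |g - 1| ≤ 2 * ε := by
    have habs : ‖((g:ℝ):ℂ) - 1‖ = |g - 1| := by
      rw [show ((g:ℝ):ℂ) - 1 = (((g - 1 : ℝ)):ℂ) by push_cast; ring, Complex.norm_real,
        Real.norm_eq_abs]
    have hsum : ∑ j : Fin (k+1), ‖mu j / (α:ℂ)‖ ≤ ε := by
      have hstep : ∀ j : Fin (k+1), ‖mu j / (α:ℂ)‖ ≤ r := by
        intro j
        rw [norm_div]
        have h1 : ‖((α:ℂ))‖ = α := by
          rw [Complex.norm_real, Real.norm_eq_abs, abs_of_pos hα0]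
        rw [h1]
        rw [div_le_iff₀ hα0]
        calc ‖mu j‖ ≤ r := hmu j
          _ ≤ r * α := by nlinarith
      calc ∑ j : Fin (k+1), ‖mu j / (α:ℂ)‖
          ≤ ∑ _j : Fin (k+1), r := Finset.sum_le_sum (fun j _ => hstep j)
        _ = ((k:ℝ)+1) * r := by
            rw [Finset.sum_const, Finset.card_univ, Fintype.card_fin, nsmul_eq_mul]
            push_cast
            ring
        _ = ε := by rw [hεdef]; ring
    have h1 := abs_prod_one_sub_sub_one (univ : Finset (Fin (k+1))) (fun j => mu j / (α:ℂ))
    have h2 := prod_one_add_le (univ : Finset (Fin (k+1))) (fun j => ‖mu j / (α:ℂ)‖)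
      (fun j _ => norm_nonneg _) (by linarith)
    rw [← hgc] at h1
    rw [habs] at h1
    calc |g - 1| ≤ ∏ j : Fin (k+1), (1 + ‖mu j / (α:ℂ)‖) - 1 := h1
      _ ≤ 2 * ∑ j : Fin (k+1), ‖mu j / (α:ℂ)‖ := by linarith
      _ ≤ 2 * ε := by linarith
  -- denominator of Cfirst
  have hpowsub : ∀ i : Fin (k+2), α^(k+1) * (α:ℝ)^(-(((i:ℕ)):ℤ)) = α^(k+1-(i:ℕ)) := by
    intro i
    have hle : (i:ℕ) ≤ k+1 := by have := i.isLt; omega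
    rw [_root_.zpow_neg, zpow_natCast]
    exact (pow_sub₀ α hαne hle).symm
  have hDen : ∑ i : Fin (k+2), (α:ℝ)^(-(((i:ℕ)):ℤ)) * aR i = (α + β) * g - α := by
    have hmul : α^(k+1) * (∑ i : Fin (k+2), (α:ℝ)^(-(((i:ℕ)):ℤ)) * aR i)
        = ∑ i : Fin (k+2), aR i * α^(k+1-(i:ℕ)) := by
      rw [Finset.mul_sum]
      apply Finset.sum_congr rfl
      intro i _
      rw [← mul_assoc, hpowsub i]
      ring
    have hsum : ∑ i : Fin (k+2), aR i * α^(k+1-(i:ℕ)) = pRα - α^(k+2) := by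
      rw [hpRαdef]; ring
    rw [hsum, hpRval] at hmul
    have hpow : (α:ℝ)^(k+1) ≠ 0 := pow_ne_zero _ hαne
    have hexp : (α:ℝ)^(k+2) = α^(k+1) * α := by rw [pow_succ]
    rw [hexp] at hmul
    have := mul_left_cancel₀ hpow (by rw [hmul]; ring :
      α^(k+1) * (∑ i : Fin (k+2), (α:ℝ)^(-(((i:ℕ)):ℤ)) * aR i) = α^(k+1) * ((α+β)*g - α))
    exact this
  -- numerator sums
  have hsum1 : ∑ i : Fin (k+2), aL i * (α⁻¹)^(i:ℕ) = -α := by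
    have hmul : α^(k+1) * (∑ i : Fin (k+2), aL i * (α⁻¹)^(i:ℕ))
        = ∑ i : Fin (k+2), aL i * α^(k+1-(i:ℕ)) := by
      rw [Finset.mul_sum]
      apply Finset.sum_congr rfl
      intro i _
      have hle : (i:ℕ) ≤ k+1 := by have := i.isLt; omega
      rw [pow_sub₀ α hαne hle, inv_pow]
      ring
    have h2 : ∑ i : Fin (k+2), aL i * α^(k+1-(i:ℕ)) = -α^(k+2) := by linarith [hrootL]
    rw [h2] at hmul
    have hpow : (α:ℝ)^(k+1) ≠ 0 := pow_ne_zero _ hαne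
    have hexp : -(α:ℝ)^(k+2) = α^(k+1) * (-α) := by rw [pow_succ]; ring
    rw [hexp] at hmul
    exact mul_left_cancel₀ hpow hmul
  have hC : Cfirst (k+2) aL aR α = (α/(α-1)) / ((α + β) * g - α) := by
    rw [Cfirst, hDen, Ssum k aL α hα]
    congr 1
    have hnum : ∑ j : Fin (k+2), aL j * ((1 - (α⁻¹)^(j:ℕ)) / (α - 1))
        = (((1 - bcMat (k+2) aL).det - 1) + α) / (α - 1) := by
      rw [hdetL1]
      have : ∀ j : Fin (k+2), aL j * ((1 - (α⁻¹)^(j:ℕ)) / (α - 1))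
          = (aL j - aL j * (α⁻¹)^(j:ℕ)) / (α - 1) := by
        intro j; ring
      rw [Finset.sum_congr rfl (fun j _ => this j), ← Finset.sum_div,
        Finset.sum_sub_distrib, hsum1]
      ring_nf
    rw [hnum]
    have hα1ne : α - 1 ≠ 0 := ne_of_gt hα1
    field_simp
    ring
  -- hyperplane equation
  have hdetU : IsUnit (1 - bcMat (k+2) aL).det := isUnit_iff_ne_zero.mpr hΔne
  have hα1' : α ≠ 1 := by intro h; rw [h] at hα1; linarith
  have hudot := udotY k aL α hα1' hrootL hdetU
  have h1mα : 1 - α ≠ 0 := by intro h; linarith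
  have hEP : ∑ i : Fin (k+2), uvec (k+2) α i * P i = α^(k+1)/(1-α) := by
    have hmem := hP.1
    rw [Eset, Set.mem_setOf_eq] at hmem
    have hsplit : ∑ i : Fin (k+2), uvec (k+2) α i * (P i - Ypt (k+2) aL i)
        = ∑ i : Fin (k+2), uvec (k+2) α i * P i
          - ∑ i : Fin (k+2), uvec (k+2) α i * Ypt (k+2) aL i := by
      rw [← Finset.sum_sub_distrib]
      apply Finset.sum_congr rfl
      intro i _
      ring
    rw [hsplit, hudot] at hmem
    linarith
  set T : ℝ := ∑ i ∈ univ.filter (fun i : Fin (k+2) => 1 ≤ (i:ℕ)), (α⁻¹)^(i:ℕ) * P i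
    with hTdef
  have hfilter0 : univ.filter (fun i : Fin (k+2) => ¬ 1 ≤ (i:ℕ))
      = {(⟨0, by omega⟩ : Fin (k+2))} := by
    ext i
    simp only [Finset.mem_filter, Finset.mem_univ, true_and, Finset.mem_singleton, Fin.ext_iff]
    omega
  have hsplit2 : ∑ i : Fin (k+2), uvec (k+2) α i * P i
      = α^(k+1) * (P ⟨0, by omega⟩ + T) := by
    have hterm : ∀ i : Fin (k+2), uvec (k+2) α i * P i
        = α^(k+1) * ((α⁻¹)^(i:ℕ) * P i) := by
      intro i
      have hle : (i:ℕ) ≤ k+1 := by have := i.isLt; omega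
      have huv : uvec (k+2) α i = α ^ (k+1-(i:ℕ)) := rfl
      rw [huv, pow_sub₀ α hαne hle, inv_pow]
      ring
    rw [Finset.sum_congr rfl (fun i _ => hterm i), ← Finset.mul_sum]
    congr 1
    rw [← Finset.sum_filter_add_sum_filter_not univ (fun i : Fin (k+2) => 1 ≤ (i:ℕ))
      (fun i => (α⁻¹)^(i:ℕ) * P i), hfilter0, Finset.sum_singleton]
    simp only [pow_zero, one_mul]
    ring
  have hP0 : P ⟨0, by omega⟩ = 1/(1-α) - T := by
    rw [hsplit2] at hEP
    have hpow : (α:ℝ)^(k+1) ≠ 0 := pow_ne_zero _ hαne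
    have h2 : α^(k+1)/(1-α) = α^(k+1) * (1/(1-α)) := by ring
    rw [h2] at hEP
    have := mul_left_cancel₀ hpow hEP
    linarith
  -- absolute values of the tail entries
  have hPabs : ∀ i : Fin (k+2), 1 ≤ (i:ℕ) →
      |P i| = 2*α/(α-1) * (((k+1).choose (i:ℕ) : ℕ) : ℝ) * r^(i:ℕ) := by
    intro i hi
    have h := hP.2 i hi
    rw [h, abs_mul]
    have hnn : (0:ℝ) ≤ 2*α/(α-1) * (((k+2-1).choose (i:ℕ) : ℕ) : ℝ) * r^(i:ℕ) := by
      have h1 : (0:ℝ) ≤ 2*α/(α-1) := div_nonneg (by linarith) (by linarith)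
      have h2 : (0:ℝ) ≤ (((k+2-1).choose (i:ℕ) : ℕ) : ℝ) := by positivity
      exact mul_nonneg (mul_nonneg h1 h2) (pow_nonneg hr.le _)
    rw [abs_of_nonneg hnn]
    rcases hs ⟨(i:ℕ)-1, by have := i.isLt; omega⟩ with h1 | h1
    · rw [h1]; norm_num
    · rw [h1]; norm_num
  have hchoose_full : ∑ i : Fin (k+2), (((k+1).choose (i:ℕ) : ℕ) : ℝ) * r^(i:ℕ)
      = (1+r)^(k+1) := by
    rw [Fin.sum_univ_eq_sum_range (fun m => (((k+1).choose m : ℕ):ℝ) * r^m) (k+2)]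
    rw [add_comm (1:ℝ) r, add_pow r 1 (k+1)]
    apply Finset.sum_congr rfl
    intro m _
    rw [one_pow, mul_one]
    ring
  have hchoose_tail : ∑ i ∈ univ.filter (fun i : Fin (k+2) => 1 ≤ (i:ℕ)),
      (((k+1).choose (i:ℕ) : ℕ) : ℝ) * r^(i:ℕ) = (1+r)^(k+1) - 1 := by
    have hfull := Finset.sum_filter_add_sum_filter_not univ (fun i : Fin (k+2) => 1 ≤ (i:ℕ))
      (fun i => (((k+1).choose (i:ℕ) : ℕ):ℝ) * r^(i:ℕ))
    rw [hfilter0, Finset.sum_singleton, hchoose_full] at hfull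
    norm_num at hfull
    linarith
  have hbinom : (1+r)^(k+1) - 1 ≤ 2*ε := by
    have hh : ((k+1:ℕ):ℝ) * r = ε := by rw [hεdef]; push_cast; ring
    have h := pow_one_add_le (k+1) r hr.le (by rw [hh]; linarith)
    rw [hh] at h
    linarith
  have hTb : |T| ≤ 4*ε/(α-1) := by
    have hainv0 : (0:ℝ) ≤ α⁻¹ := by positivity
    have hainv1 : α⁻¹ ≤ 1 := by
      rw [inv_le_one_iff₀]
      right; linarith
    have h1 : |T| ≤ ∑ i ∈ univ.filter (fun i : Fin (k+2) => 1 ≤ (i:ℕ)),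
        |(α⁻¹)^(i:ℕ) * P i| := by
      rw [hTdef]
      exact Finset.abs_sum_le_sum_abs _ _
    have h2 : ∀ i ∈ univ.filter (fun i : Fin (k+2) => 1 ≤ (i:ℕ)),
        |(α⁻¹)^(i:ℕ) * P i| ≤ α⁻¹ * (2*α/(α-1) * (((k+1).choose (i:ℕ) : ℕ):ℝ) * r^(i:ℕ)) := by
      intro i hi
      rw [Finset.mem_filter] at hi
      have hi1 : 1 ≤ (i:ℕ) := hi.2
      rw [abs_mul, abs_pow, abs_of_nonneg hainv0, hPabs i hi1]
      apply mul_le_mul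
      · calc (α⁻¹)^(i:ℕ) ≤ (α⁻¹)^1 := pow_le_pow_of_le_one hainv0 hainv1 hi1
          _ = α⁻¹ := pow_one _
      · exact le_refl _
      · exact mul_nonneg (mul_nonneg (div_nonneg (by linarith) (by linarith)) (by positivity))
          (pow_nonneg hr.le _)
      · exact hainv0
    have h3 : ∑ i ∈ univ.filter (fun i : Fin (k+2) => 1 ≤ (i:ℕ)),
        α⁻¹ * (2*α/(α-1) * (((k+1).choose (i:ℕ) : ℕ):ℝ) * r^(i:ℕ))
        = α⁻¹ * (2*α/(α-1)) * ((1+r)^(k+1) - 1) := by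
      rw [← hchoose_tail, Finset.mul_sum]
      apply Finset.sum_congr rfl
      intro i _
      ring
    have h4 : α⁻¹ * (2*α/(α-1)) = 2/(α-1) := by
      field_simp
    have h5 : |T| ≤ 2/(α-1) * ((1+r)^(k+1) - 1) := by
      calc |T| ≤ _ := h1
        _ ≤ ∑ i ∈ univ.filter (fun i : Fin (k+2) => 1 ≤ (i:ℕ)),
            α⁻¹ * (2*α/(α-1) * (((k+1).choose (i:ℕ) : ℕ):ℝ) * r^(i:ℕ)) :=
          Finset.sum_le_sum h2
        _ = 2/(α-1) * ((1+r)^(k+1) - 1) := by rw [h3, h4]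
    have h6 : 2/(α-1) * ((1+r)^(k+1) - 1) ≤ 2/(α-1) * (2*ε) := by
      apply mul_le_mul_of_nonneg_left hbinom
      positivity
    calc |T| ≤ 2/(α-1) * (2*ε) := le_trans h5 h6
      _ = 4*ε/(α-1) := by ring
  have hP1 : |P ⟨1, by omega⟩| = 2*α*ε/(α-1) := by
    have h := hPabs ⟨1, by omega⟩ (le_refl 1)
    rw [h, Nat.choose_one_right, hεdef]
    push_cast
    ring
  -- final arithmetic
  set G : ℝ := (α + β) * g - α with hGdef
  obtain ⟨hgl, hgr⟩ := abs_le.mp hgabs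
  have hg1 : 1 - 2*ε ≤ g := by linarith
  have hg2 : g ≤ 1 + 2*ε := by linarith
  have hαβpos : (0:ℝ) < α + β := by linarith
  have hGlow : β - 2*ε*(α+β) ≤ G := by
    rw [hGdef]
    linarith [mul_nonneg (le_of_lt hαβpos) (show (0:ℝ) ≤ g - (1-2*ε) by linarith),
      (by ring : (α+β) * (g - (1-2*ε)) = (α+β)*g - (α+β) + 2*ε*(α+β))]
  have hGhigh : G ≤ β + 2*ε*(α+β) := by
    rw [hGdef]
    linarith [mul_nonneg (le_of_lt hαβpos) (show (0:ℝ) ≤ (1+2*ε) - g by linarith),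
      (by ring : (α+β) * ((1+2*ε) - g) = (α+β) + 2*ε*(α+β) - (α+β)*g)]
  obtain ⟨hGpos, hG25⟩ := arith_G α β ε G hα hβ hεα hεβ hGlow hGhigh
  set q : ℝ := α / G with hqdef
  have hqpos : 0 < q := div_pos hα0 hGpos
  have hq1 : α / (β + 2/5) < q := by
    rw [hqdef]
    exact div_lt_div_of_pos_left hα0 hGpos hG25
  have hq2 : 3*α/(5*β) ≤ α/(β + 2/5) := arith_q2 α β hα hβ
  have hq3 : 3*α ≤ 5*β*q := by
    have h := le_trans hq2 (le_of_lt hq1)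
    rw [div_le_iff₀ (by positivity)] at h
    linarith
  have hβφpos : 0 < β*φ := mul_pos hβ0 hφpos
  have hkey : 2*α*ε < β*φ/3 * (1 + q - 4*ε) :=
    arith_key α β ε φ q hα hβ hφpos hεpos hεφ hε10 hq3 hqpos
  have hGne : G ≠ 0 := ne_of_gt hGpos
  have hαm1ne : α - 1 ≠ 0 := ne_of_gt hα1
  have hd : Cfirst (k+2) aL aR α - P ⟨0, by omega⟩ = q/(α-1) + 1/(α-1) + T := by
    rw [hC, hP0, hqdef, hGdef]
    rw [hGdef] at hGne
    field_simp
    ring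
  have hTlow : -(4*ε/(α-1)) ≤ T := neg_le_of_abs_le hTb
  have hdlow : (1 + q - 4*ε)/(α-1) ≤ q/(α-1) + 1/(α-1) + T := by
    have h2 : (1 + q - 4*ε)/(α-1) = q/(α-1) + 1/(α-1) - 4*ε/(α-1) := by ring
    linarith
  have hnum_pos : 0 < 1 + q - 4*ε := by linarith
  have hdpos0 : 0 < (1 + q - 4*ε)/(α-1) := div_pos hnum_pos hα1
  have hdpos : 0 < Cfirst (k+2) aL aR α - P ⟨0, by omega⟩ := by
    rw [hd]
    linarith
  rw [div_lt_iff₀ hdpos, hP1, hd]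
  have hβφ3 : (0:ℝ) ≤ β*φ/3 := by positivity
  calc 2*α*ε/(α-1) < (β*φ/3) * (1 + q - 4*ε)/(α-1) := by
        rw [div_lt_div_iff₀ hα1 hα1]
        calc 2*α*ε*(α-1) < (β*φ/3 * (1 + q - 4*ε))*(α-1) :=
              mul_lt_mul_of_pos_right hkey hα1
          _ = β*φ/3 * (1 + q - 4*ε)*(α-1) := by ring
    _ = (β*φ/3) * ((1 + q - 4*ε)/(α-1)) := by ring
    _ ≤ (β*φ/3) * (q/(α-1) + 1/(α-1) + T) := mul_le_mul_of_nonneg_left hdlow hβφ3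
    _ = β * φ / 3 * (q/(α-1) + 1/(α-1) + T) := by ring
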